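/- arXiv:2008.11276 — 3 statements merged into one kernel-verified Lean document; each statement's English description precedes it below -/
import Mathlib

section
/- Let U : ℝ → ℝ be four times continuously differentiable and let p be the unique quadratic polynomial whose averages over the intervals [x_{i−1} − h/2, x_{i−1} + h/2], [x_i − h/2, x_i + h/2], [x_{i+1} − h/2, x_{i+1} + h/2] (with x_{i±1} = x_i ± Δx) agree with those of U. Then p''(x_i) differs from U''(x_i) by O(Δx²): there is a constant C depending only on sup|U⁗| with |p'' − U''(x_i)| ≤ C Δx². -/
private lemma step_bound {g g' : ℝ → ℝ} {a r K : ℝ} (hr : 0 ≤ r)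
    (hg : ∀ x, HasDerivAt g (g' x) x) (h0 : g a = 0)
    (hK : ∀ y ∈ Set.Icc (a - r) (a + r), |g' y| ≤ K) :
    ∀ y ∈ Set.Icc (a - r) (a + r), |g y| ≤ K * r := by
  intro y hy
  have ha : a ∈ Set.Icc (a - r) (a + r) := ⟨by linarith, by linarith⟩
  have hK0 : 0 ≤ K := le_trans (abs_nonneg _) (hK a ha)
  have key := (convex_Icc (a - r) (a + r)).norm_image_sub_le_of_norm_hasDerivWithin_le
    (fun x _ => (hg x).hasDerivWithinAt)
    (fun x hx => by simpa [Real.norm_eq_abs] using hK x hx) ha hy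
  rw [h0, sub_zero] at key
  have hya : ‖y - a‖ ≤ r := by
    rw [Real.norm_eq_abs]
    exact abs_le.mpr ⟨by linarith [hy.1], by linarith [hy.2]⟩
  calc |g y| = ‖g y‖ := (Real.norm_eq_abs _).symm
    _ ≤ K * ‖y - a‖ := key
    _ ≤ K * r := mul_le_mul_of_nonneg_left hya hK0

private lemma integral_of_antideriv {F f : ℝ → ℝ} (hF : ∀ x, HasDerivAt F (f x) x)
    (hf : Continuous f) (a b : ℝ) : ∫ x in a..b, f x = F b - F a :=
  intervalIntegral.integral_eq_sub_of_hasDerivAt (fun x _ => hF x) (hf.intervalIntegrable a b)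

set_option maxHeartbeats 1000000 in
/-- The quadratic polynomial matching the box averages of a smooth field `U`
over three neighboring teeth has second derivative within `O(Δx²)` of `U''`,
with a constant depending only on the bound `M` on the fourth derivative. -/
theorem gap_tooth_quadratic_second_derivative
    (M : ℝ) :
    ∃ C : ℝ, 0 ≤ C ∧
      ∀ (U : ℝ → ℝ), ContDiff ℝ 4 U →
        (∀ x, |iteratedDeriv 4 U x| ≤ M) →
        ∀ (Δx h xi : ℝ), 0 < h → h ≤ Δx →
          ∀ p : ℝ → ℝ,
            (∃ c0 c1 c2 : ℝ, ∀ x, p x = c0 + c1 * x + c2 * x^2) →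
            (∀ j : ℤ, j = -1 ∨ j = 0 ∨ j = 1 →
              ∫ x in (xi + j * Δx - h/2)..(xi + j * Δx + h/2), p x
                = ∫ x in (xi + j * Δx - h/2)..(xi + j * Δx + h/2), U x) →
            |deriv (deriv p) xi - deriv (deriv U) xi| ≤ C * Δx^2 := by
  refine ⟨81/4 * max M 0, by positivity, ?_⟩
  intro U hU hM4 Δx h xi hh hhΔ p hpoly hmatch
  obtain ⟨c0, c1, c2, hp⟩ := hpoly
  have hΔ : 0 < Δx := lt_of_lt_of_le hh hhΔ
  have m1 := hmatch 1 (by norm_num)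
  have m0 := hmatch 0 (by norm_num)
  have mm := hmatch (-1) (by norm_num)
  simp only [Int.cast_one, Int.cast_zero, Int.cast_neg, one_mul, zero_mul, neg_mul,
    add_zero] at m1 m0 mm
  set U1 := deriv U with hU1
  set U2 := deriv U1 with hU2
  set U3 := deriv U2 with hU3
  set U4 := deriv U3 with hU4
  have h4 : iteratedDeriv 4 U = U4 := by
    rw [show (4:ℕ) = 3+1 from rfl, iteratedDeriv_succ, show (3:ℕ) = 2+1 from rfl,
      iteratedDeriv_succ, show (2:ℕ) = 1+1 from rfl, iteratedDeriv_succ, iteratedDeriv_one]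
  have hM : ∀ x, |U4 x| ≤ M := by intro x; rw [← h4]; exact hM4 x
  have hM0 : 0 ≤ M := le_trans (abs_nonneg _) (hM 0)
  have hdU : Differentiable ℝ U := hU.differentiable (by norm_num)
  have hdU1 : Differentiable ℝ U1 := by
    have := hU.differentiable_iteratedDeriv 1 (by norm_num)
    simpa [iteratedDeriv_one] using this
  have hdU2 : Differentiable ℝ U2 := by
    have := hU.differentiable_iteratedDeriv 2 (by norm_num)
    simpa [show (2:ℕ) = 1+1 from rfl, iteratedDeriv_succ, iteratedDeriv_one] using this
  have hdU3 : Differentiable ℝ U3 := by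
    have := hU.differentiable_iteratedDeriv 3 (by norm_num)
    simpa [show (3:ℕ) = 2+1 from rfl, show (2:ℕ) = 1+1 from rfl,
      iteratedDeriv_succ, iteratedDeriv_one] using this
  set r := Δx + h/2 with hrdef
  have hr0 : 0 ≤ r := by rw [hrdef]; linarith
  -- Taylor error bounds via repeated mean value theorem
  have hB3 : ∀ y ∈ Set.Icc (xi - r) (xi + r), |U3 y - U3 xi| ≤ M * r :=
    step_bound hr0 (fun x => (hdU3 x).hasDerivAt.sub_const _) (sub_self _)
      (fun y _ => hM y)
  have hB2 : ∀ y ∈ Set.Icc (xi - r) (xi + r),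
      |U2 y - (U2 xi + U3 xi * (y - xi))| ≤ M * r * r := by
    refine step_bound hr0 (g' := fun x => U3 x - U3 xi) ?_ (by simp) hB3
    intro x
    have hpoly : HasDerivAt (fun y : ℝ => U2 xi + U3 xi * (y - xi)) (U3 xi) x := by
      have := (hasDerivAt_const x (U2 xi)).add
        (((hasDerivAt_id' x).sub_const xi).const_mul (U3 xi))
      exact this.congr_deriv (by ring)
    exact (hdU2 x).hasDerivAt.sub hpoly
  have hB1 : ∀ y ∈ Set.Icc (xi - r) (xi + r),
      |U1 y - (U1 xi + U2 xi * (y - xi) + U3 xi/2 * (y - xi)^2)| ≤ M * r * r * r := by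
    refine step_bound hr0 (g' := fun x => U2 x - (U2 xi + U3 xi * (x - xi))) ?_ (by simp) hB2
    intro x
    have hpoly : HasDerivAt
        (fun y : ℝ => U1 xi + U2 xi * (y - xi) + U3 xi/2 * (y - xi)^2)
        (U2 xi + U3 xi * (x - xi)) x := by
      have := ((hasDerivAt_const x (U1 xi)).add
        (((hasDerivAt_id' x).sub_const xi).const_mul (U2 xi))).add
        ((((hasDerivAt_id' x).sub_const xi).pow 2).const_mul (U3 xi/2))
      exact this.congr_deriv (by ring)
    exact (hdU1 x).hasDerivAt.sub hpoly
  have hB0 : ∀ y ∈ Set.Icc (xi - r) (xi + r),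
      |U y - (U xi + U1 xi * (y - xi) + U2 xi/2 * (y - xi)^2 + U3 xi/6 * (y - xi)^3)|
        ≤ M * r * r * r * r := by
    refine step_bound hr0
      (g' := fun x => U1 x - (U1 xi + U2 xi * (x - xi) + U3 xi/2 * (x - xi)^2)) ?_ (by simp) hB1
    intro x
    have hpoly : HasDerivAt
        (fun y : ℝ => U xi + U1 xi * (y - xi) + U2 xi/2 * (y - xi)^2 + U3 xi/6 * (y - xi)^3)
        (U1 xi + U2 xi * (x - xi) + U3 xi/2 * (x - xi)^2) x := by
      have := (((hasDerivAt_const x (U xi)).add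
        (((hasDerivAt_id' x).sub_const xi).const_mul (U1 xi))).add
        ((((hasDerivAt_id' x).sub_const xi).pow 2).const_mul (U2 xi/2))).add
        ((((hasDerivAt_id' x).sub_const xi).pow 3).const_mul (U3 xi/6))
      exact this.congr_deriv (by ring)
    exact (hdU x).hasDerivAt.sub hpoly
  -- exact integrals of the polynomials
  have hFp : ∀ a b : ℝ, (∫ x in a..b, p x)
      = (c0*b + c1/2*b^2 + c2/3*b^3) - (c0*a + c1/2*a^2 + c2/3*a^3) := by
    intro a b
    have hpc : Continuous p := by
      have hpe : p = fun x => c0 + c1 * x + c2 * x^2 := funext hp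
      rw [hpe]; fun_prop
    refine integral_of_antideriv (F := fun x => c0*x + c1/2*x^2 + c2/3*x^3) ?_ hpc a b
    intro x
    rw [hp x]
    have := (((hasDerivAt_id' x).const_mul c0).add
      ((hasDerivAt_pow 2 x).const_mul (c1/2))).add
      ((hasDerivAt_pow 3 x).const_mul (c2/3))
    exact this.congr_deriv (by push_cast; ring)
  have hFT : ∀ a b : ℝ,
      (∫ x in a..b, (U xi + U1 xi * (x - xi) + U2 xi/2 * (x - xi)^2 + U3 xi/6 * (x - xi)^3))
      = (U xi*(b-xi) + U1 xi/2*(b-xi)^2 + U2 xi/6*(b-xi)^3 + U3 xi/24*(b-xi)^4)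
        - (U xi*(a-xi) + U1 xi/2*(a-xi)^2 + U2 xi/6*(a-xi)^3 + U3 xi/24*(a-xi)^4) := by
    intro a b
    refine integral_of_antideriv
      (F := fun x => U xi*(x-xi) + U1 xi/2*(x-xi)^2 + U2 xi/6*(x-xi)^3 + U3 xi/24*(x-xi)^4)
      ?_ (by fun_prop) a b
    intro x
    have := (((((hasDerivAt_id' x).sub_const xi).const_mul (U xi)).add
      ((((hasDerivAt_id' x).sub_const xi).pow 2).const_mul (U1 xi/2))).add
      ((((hasDerivAt_id' x).sub_const xi).pow 3).const_mul (U2 xi/6))).add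
      ((((hasDerivAt_id' x).sub_const xi).pow 4).const_mul (U3 xi/24))
    exact this.congr_deriv (by push_cast; ring)
  have hUcont : Continuous U := hU.continuous
  have hTcont : Continuous
      (fun x => U xi + U1 xi * (x - xi) + U2 xi/2 * (x - xi)^2 + U3 xi/6 * (x - xi)^3) := by
    fun_prop
  have esplit : ∀ a b : ℝ,
      (∫ x in a..b, (U x - (U xi + U1 xi * (x - xi) + U2 xi/2 * (x - xi)^2 + U3 xi/6 * (x - xi)^3)))
      = (∫ x in a..b, U x)
        - ∫ x in a..b, (U xi + U1 xi * (x - xi) + U2 xi/2 * (x - xi)^2 + U3 xi/6 * (x - xi)^3) :=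
    fun a b => intervalIntegral.integral_sub (hUcont.intervalIntegrable a b)
      (hTcont.intervalIntegrable a b)
  -- main per-box lemma
  have main : ∀ m : ℝ, xi - Δx ≤ m → m ≤ xi + Δx →
      (∫ x in (m - h/2)..(m + h/2), p x) = (∫ x in (m - h/2)..(m + h/2), U x) →
      ∃ e : ℝ, |e| ≤ M * r * r * r * r * h ∧
        (c0*(m + h/2) + c1/2*(m + h/2)^2 + c2/3*(m + h/2)^3)
          - (c0*(m - h/2) + c1/2*(m - h/2)^2 + c2/3*(m - h/2)^3)
        = (U xi*(m + h/2 - xi) + U1 xi/2*(m + h/2 - xi)^2 + U2 xi/6*(m + h/2 - xi)^3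
            + U3 xi/24*(m + h/2 - xi)^4)
          - (U xi*(m - h/2 - xi) + U1 xi/2*(m - h/2 - xi)^2 + U2 xi/6*(m - h/2 - xi)^3
            + U3 xi/24*(m - h/2 - xi)^4) + e := by
    intro m hm1 hm2 heq
    refine ⟨∫ x in (m - h/2)..(m + h/2),
      (U x - (U xi + U1 xi * (x - xi) + U2 xi/2 * (x - xi)^2 + U3 xi/6 * (x - xi)^3)), ?_, ?_⟩
    · have hb : ∀ x ∈ Set.uIoc (m - h/2) (m + h/2),
          ‖U x - (U xi + U1 xi * (x - xi) + U2 xi/2 * (x - xi)^2 + U3 xi/6 * (x - xi)^3)‖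
            ≤ M * r * r * r * r := by
        intro x hx
        rw [Set.uIoc_of_le (by linarith)] at hx
        rw [Real.norm_eq_abs]
        refine hB0 x ⟨?_, ?_⟩
        · have := hx.1; rw [hrdef]; linarith
        · have := hx.2; rw [hrdef]; linarith
      have := intervalIntegral.norm_integral_le_of_norm_le_const hb
      rw [show (m + h/2) - (m - h/2) = h by ring, abs_of_pos hh, Real.norm_eq_abs] at this
      exact this
    · have h1 := hFp (m - h/2) (m + h/2)
      have h2 := hFT (m - h/2) (m + h/2)
      have h3 := esplit (m - h/2) (m + h/2)
      linarith [heq]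
  obtain ⟨e1, he1, q1⟩ := main (xi + Δx) (by linarith) (by linarith) m1
  obtain ⟨e0, he0, q0⟩ := main xi (by linarith) (by linarith) m0
  obtain ⟨em, hem, qm⟩ := main (xi + -Δx) (by linarith) (by linarith) mm
  have key : (2*c2 - U2 xi) * (h * Δx^2) = e1 + em - 2*e0 := by
    linear_combination q1 + qm - 2*q0
  -- second derivative of p
  have hp' : deriv p = fun x => c1 + 2*c2*x := by
    funext x
    have hpe : p = fun x => c0 + c1 * x + c2 * x^2 := funext hp
    rw [hpe]
    have hd : HasDerivAt (fun x => c0 + c1 * x + c2 * x^2) (c1 + 2*c2*x) x := by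
      have := ((hasDerivAt_const x c0).add ((hasDerivAt_id' x).const_mul c1)).add
        ((hasDerivAt_pow 2 x).const_mul c2)
      exact this.congr_deriv (by push_cast; ring)
    exact hd.deriv
  have hpp : deriv (deriv p) xi = 2*c2 := by
    rw [hp']
    have hd : HasDerivAt (fun x => c1 + 2*c2*x) (2*c2) xi := by
      have := (hasDerivAt_const xi c1).add ((hasDerivAt_id' xi).const_mul (2*c2))
      exact this.congr_deriv (by ring)
    exact hd.deriv
  rw [hpp, max_eq_left hM0]
  -- final estimate
  have habs : |2*c2 - U2 xi| * (h * Δx^2) ≤ 4 * (M * r * r * r * r * h) := by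
    have hpos : (0:ℝ) < h * Δx^2 := by positivity
    have e1' := abs_le.mp he1
    have e0' := abs_le.mp he0
    have em' := abs_le.mp hem
    have : |(2*c2 - U2 xi) * (h * Δx^2)| = |2*c2 - U2 xi| * (h * Δx^2) := by
      rw [abs_mul, abs_of_pos hpos]
    rw [← this, key]
    exact abs_le.mpr ⟨by linarith, by linarith⟩
  have hrle : r ≤ 3/2 * Δx := by rw [hrdef]; linarith
  have h2 : r * r ≤ 9/4 * (Δx * Δx) := by nlinarith
  have h4' : (r * r) * (r * r) ≤ (9/4 * (Δx * Δx)) * (9/4 * (Δx * Δx)) :=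
    mul_le_mul h2 h2 (mul_nonneg hr0 hr0) (by positivity)
  have step : 4 * (M * r * r * r * r * h) ≤ (81/4 * M * Δx^2) * (h * Δx^2) := by
    have hMh : (0:ℝ) ≤ 4 * M := by linarith
    calc 4 * (M * r * r * r * r * h)
        = (M * h) * (4 * ((r * r) * (r * r))) := by ring
      _ ≤ (M * h) * (4 * ((9/4 * (Δx * Δx)) * (9/4 * (Δx * Δx)))) := by
          apply mul_le_mul_of_nonneg_left _ (mul_nonneg hM0 hh.le)
          linarith
      _ = (81/4 * M * Δx^2) * (h * Δx^2) := by ring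
  have hfin : |2*c2 - U2 xi| * (h * Δx^2) ≤ (81/4 * M * Δx^2) * (h * Δx^2) :=
    le_trans habs step
  have := le_of_mul_le_mul_right hfin (by positivity : (0:ℝ) < h * Δx^2)
  linarith
end

section
/- Let a : ℝ → ℝ be measurable, 1-periodic, with 0 < α ≤ a ≤ β. Define the quadratic form Q(v) = ∫₀¹ a(y)|v'(y) − 1|² dy over 1-periodic H¹ functions v. Then the infimum of Q equals the harmonic mean a* = (∫₀¹ 1/a dy)⁻¹, attained by the cell-problem solution χ. -/
open MeasureTheory

private lemma eff_diff_bdd_int (f : ℝ → ℝ) (hf : Measurable f) (C : ℝ)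
    (h : ∀ y, |f y| ≤ C) : IntervalIntegrable f volume 0 1 := by
  refine IntervalIntegrable.mono_fun (intervalIntegrable_const (c := C))
    hf.aestronglyMeasurable ?_
  filter_upwards with y
  calc ‖f y‖ = |f y| := rfl
    _ ≤ C := h y
    _ ≤ ‖C‖ := le_abs_self C

private lemma eff_diff_key (A t c : ℝ) (hA : 0 < A) :
    -2*c*t - c^2*A⁻¹ ≤ A*t^2 := by
  have h1 : A * (t + c/A)^2 = A*t^2 + 2*c*t + c^2*A⁻¹ := by
    field_simp
    ring
  nlinarith [mul_nonneg hA.le (sq_nonneg (t + c/A))]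

/-- Variational characterization of the 1D effective diffusivity: the minimum
of `∫₀¹ a |v' − 1|²` over 1-periodic `H¹` functions `v` (encoded by their
periodic, mean-zero derivatives `g = v'`) equals the harmonic mean
`a* = (∫₀¹ 1/a)⁻¹`, and is attained (by the cell-problem corrector). -/
theorem effective_diffusivity_variational
    (a : ℝ → ℝ) (α β : ℝ) (hα : 0 < α)
    (ha_meas : Measurable a) (ha_per : Function.Periodic a 1)
    (ha_lb : ∀ y, α ≤ a y) (ha_ub : ∀ y, a y ≤ β) :
    IsLeast
      {q : ℝ | ∃ g : ℝ → ℝ, Measurable g ∧ Function.Periodic g 1 ∧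
        (∫ y in (0:ℝ)..1, g y) = 0 ∧
        IntervalIntegrable (fun y => a y * (g y - 1)^2) MeasureTheory.volume 0 1 ∧
        q = ∫ y in (0:ℝ)..1, a y * (g y - 1)^2}
      ((∫ y in (0:ℝ)..1, (a y)⁻¹)⁻¹) := by
  have hapos : ∀ y, 0 < a y := fun y => lt_of_lt_of_le hα (ha_lb y)
  have hβ : 0 < β := lt_of_lt_of_le hα ((ha_lb 0).trans (ha_ub 0))
  set m := ∫ y in (0:ℝ)..1, (a y)⁻¹ with hm
  have hinv_int : IntervalIntegrable (fun y => (a y)⁻¹) volume 0 1 := by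
    refine eff_diff_bdd_int _ ha_meas.inv α⁻¹ (fun y => ?_)
    rw [abs_of_nonneg (inv_nonneg.2 (hapos y).le)]
    exact inv_anti₀ hα (ha_lb y)
  have hm_pos : 0 < m := by
    have hle : β⁻¹ ≤ m := by
      have := intervalIntegral.integral_mono_on (by norm_num : (0:ℝ) ≤ 1)
        (intervalIntegrable_const (c := β⁻¹)) hinv_int
        (fun x _ => inv_anti₀ (hapos x) (ha_ub x))
      simpa using this
    exact lt_of_lt_of_le (inv_pos.2 hβ) hle
  have hm_ne : m ≠ 0 := hm_pos.ne'
  constructor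
  · -- membership
    refine ⟨fun y => 1 - m⁻¹ * (a y)⁻¹, ?_, ?_, ?_, ?_, ?_⟩
    · exact measurable_const.sub (measurable_const.mul ha_meas.inv)
    · intro y; simp [ha_per y]
    · rw [intervalIntegral.integral_sub (intervalIntegrable_const (c := (1:ℝ)))
        (hinv_int.const_mul m⁻¹), intervalIntegral.integral_const_mul]
      simp [← hm, inv_mul_cancel₀ hm_ne]
    · have hpt : (fun y => a y * ((1 - m⁻¹ * (a y)⁻¹) - 1)^2)
          = fun y => m⁻¹^2 * (a y)⁻¹ := by
        funext y
        have h0 : a y ≠ 0 := (hapos y).ne'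
        field_simp
        ring
      rw [hpt]
      exact hinv_int.const_mul _
    · have hpt : ∀ y ∈ Set.uIcc (0:ℝ) 1, a y * ((1 - m⁻¹ * (a y)⁻¹) - 1)^2
          = m⁻¹^2 * (a y)⁻¹ := by
        intro y _
        have h0 : a y ≠ 0 := (hapos y).ne'
        field_simp
        ring
      rw [intervalIntegral.integral_congr hpt, intervalIntegral.integral_const_mul,
        ← hm]
      field_simp
  · -- lower bound
    rintro q ⟨g, hg_meas, hg_per, hg_mean, hg_int, rfl⟩
    set c := m⁻¹ with hc
    -- integrability of (g-1)^2
    have hsq_int : IntervalIntegrable (fun y => (g y - 1)^2) volume 0 1 := by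
      refine IntervalIntegrable.mono_fun (hg_int.const_mul α⁻¹)
        ((hg_meas.sub measurable_const).pow_const 2).aestronglyMeasurable ?_
      filter_upwards with y
      have h1 : (g y - 1)^2 ≤ α⁻¹ * (a y * (g y - 1)^2) := by
        have h2 : α * (g y - 1)^2 ≤ a y * (g y - 1)^2 :=
          mul_le_mul_of_nonneg_right (ha_lb y) (sq_nonneg _)
        have h4 := mul_le_mul_of_nonneg_left h2 (inv_nonneg.2 hα.le)
        rwa [← mul_assoc, inv_mul_cancel₀ hα.ne', one_mul] at h4
      have h3 : 0 ≤ α⁻¹ * (a y * (g y - 1)^2) :=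
        mul_nonneg (inv_nonneg.2 hα.le) (mul_nonneg (hapos y).le (sq_nonneg _))
      simp only [Real.norm_eq_abs, abs_of_nonneg (sq_nonneg (g y - 1)),
        abs_of_nonneg h3]
      exact h1
    -- integrability of g - 1
    have hg1_int : IntervalIntegrable (fun y => g y - 1) volume 0 1 := by
      refine IntervalIntegrable.mono_fun
        ((intervalIntegrable_const (c := (1:ℝ))).add hsq_int)
        (hg_meas.sub measurable_const).aestronglyMeasurable ?_
      filter_upwards with y
      have h1 : |g y - 1| ≤ 1 + (g y - 1)^2 := by
        nlinarith [sq_nonneg (|g y - 1| - 1), sq_abs (g y - 1)]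
      have h2 : (0:ℝ) ≤ 1 + (g y - 1)^2 := by positivity
      simpa [Real.norm_eq_abs, abs_of_nonneg h2] using h1
    have hg_intble : IntervalIntegrable g volume 0 1 := by
      have := hg1_int.add (intervalIntegrable_const (c := (1:ℝ)))
      simpa using this
    have hmean1 : (∫ y in (0:ℝ)..1, (g y - 1)) = -1 := by
      rw [intervalIntegral.integral_sub hg_intble
        (intervalIntegrable_const (c := (1:ℝ))), hg_mean]
      simp
    -- pointwise inequality and integral comparison
    have hlhs_int : IntervalIntegrable
        (fun y => -2*c*(g y - 1) - c^2*(a y)⁻¹) volume 0 1 := by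
      have h1 := hg1_int.const_mul (-2*c)
      have h2 := hinv_int.const_mul (c^2)
      simpa [mul_assoc] using h1.sub h2
    have hmono := intervalIntegral.integral_mono_on (by norm_num : (0:ℝ) ≤ 1)
      hlhs_int hg_int
      (fun y _ => eff_diff_key (a y) (g y - 1) c (hapos y))
    have hlhs_val : (∫ y in (0:ℝ)..1, (-2*c*(g y - 1) - c^2*(a y)⁻¹)) = m⁻¹ := by
      have e1 : (fun y => -2*c*(g y - 1) - c^2*(a y)⁻¹)
          = fun y => (-2*c)*(g y - 1) - (c^2)*(a y)⁻¹ := by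
        funext y; ring
      rw [e1, intervalIntegral.integral_sub (hg1_int.const_mul _)
        (hinv_int.const_mul _), intervalIntegral.integral_const_mul,
        intervalIntegral.integral_const_mul, hmean1, ← hm, hc]
      field_simp
      ring
    rw [hlhs_val] at hmono
    exact hmono
end

section
/- Let a : ℝ → ℝ be continuous, 1-periodic, a ≥ α > 0, and fix ε > 0 with 1/ε ∈ ℕ. For the steady-state two-point boundary value problem d/dx(a(x/ε) u') = 0 on [0,1] with u(0) = 0, u(1) = 1, the unique solution is u_ε(x) = a* ∫₀ˣ dy/a(y/ε), where a* = (∫₀¹ 1/a dy)⁻¹, and u_ε converges uniformly on [0,1] to the homogenized solution u_h(x) = x as ε → 0, with |u_ε(x) − u_h(x)| ≤ Cε for a constant C depending only on α and sup a. -/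
open intervalIntegral

section Aux

variable {a : ℝ → ℝ} {α : ℝ}

private lemma aux_ne (hα : 0 < α) (ha_lb : ∀ y, α ≤ a y) : ∀ y, a y ≠ 0 :=
  fun y => (hα.trans_le (ha_lb y)).ne'

private lemma aux_g_cont (hα : 0 < α) (ha_cont : Continuous a) (ha_lb : ∀ y, α ≤ a y)
    (ε : ℝ) : Continuous fun y => (a (y / ε))⁻¹ :=
  ((ha_cont.comp (continuous_id.div_const ε)).inv₀
    (fun y => aux_ne hα ha_lb (y / ε)))

private lemma aux_g_per (ha_per : Function.Periodic a 1) {ε : ℝ} (hε : ε ≠ 0) :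
    Function.Periodic (fun y => (a (y / ε))⁻¹) ε := by
  intro y
  have : (y + ε) / ε = y / ε + 1 := by field_simp
  simp only [this, ha_per (y / ε)]

private lemma aux_int_per (hα : 0 < α) (ha_cont : Continuous a)
    (ha_lb : ∀ y, α ≤ a y) {ε : ℝ} (hε : 0 < ε) :
    ∫ y in (0:ℝ)..ε, (a (y / ε))⁻¹ = ε * ∫ y in (0:ℝ)..1, (a y)⁻¹ := by
  rw [intervalIntegral.integral_comp_div (f := fun y => (a y)⁻¹) hε.ne']
  simp [div_self hε.ne', smul_eq_mul]

private lemma aux_est (hα : 0 < α) (ha_cont : Continuous a) (ha_per : Function.Periodic a 1)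
    (ha_lb : ∀ y, α ≤ a y) {ε : ℝ} (hε : 0 < ε) (t : ℝ) :
    |(∫ y in (0:ℝ)..t, (a (y / ε))⁻¹) - (∫ y in (0:ℝ)..1, (a y)⁻¹) * t| ≤ ε / α := by
  set g : ℝ → ℝ := fun y => (a (y / ε))⁻¹ with hg
  set I : ℝ := ∫ y in (0:ℝ)..1, (a y)⁻¹ with hI
  have hgc : Continuous g := aux_g_cont hα ha_cont ha_lb ε
  have hint : ∀ t₁ t₂ : ℝ, IntervalIntegrable g MeasureTheory.volume t₁ t₂ :=
    fun t₁ t₂ => hgc.intervalIntegrable t₁ t₂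
  have hper : Function.Periodic g ε := aux_g_per ha_per hε.ne'
  set r : ℝ := Int.fract (t / ε) * ε with hr
  have hrmem : r ∈ Set.Ico (0:ℝ) ε := Int.fract_div_mul_self_mem_Ico ε t hε
  have hsplit : (∫ y in (0:ℝ)..t, g y) = (∫ y in (0:ℝ)..r, g y) + ⌊t / ε⌋ • (ε * I) := by
    conv_lhs => rw [← Int.fract_div_mul_self_add_zsmul_eq ε t hε.ne',
      ← intervalIntegral.integral_add_adjacent_intervals (hint 0 r) (hint r _)]
    rw [hper.intervalIntegral_add_zsmul_eq ⌊t / ε⌋ r hint,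
      hper.intervalIntegral_add_eq r 0, zero_add, aux_int_per hα ha_cont ha_lb hε]
  have ht : r + ⌊t / ε⌋ • ε = t := Int.fract_div_mul_self_add_zsmul_eq ε t hε.ne'
  have hginv : ∀ y, (0:ℝ) ≤ g y ∧ g y ≤ α⁻¹ := by
    intro y
    refine ⟨inv_nonneg.2 (hα.le.trans (ha_lb _)), ?_⟩
    exact inv_anti₀ hα (ha_lb _)
  have hX1 : (0:ℝ) ≤ ∫ y in (0:ℝ)..r, g y :=
    intervalIntegral.integral_nonneg hrmem.1 (fun y _ => (hginv y).1)
  have hX2 : (∫ y in (0:ℝ)..r, g y) ≤ r * α⁻¹ := by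
    have := intervalIntegral.integral_mono_on hrmem.1 (hint 0 r)
      (_root_.intervalIntegrable_const (c := α⁻¹)) (fun y _ => (hginv y).2)
    simpa using this
  have hI1 : (0:ℝ) ≤ I :=
    intervalIntegral.integral_nonneg zero_le_one (fun y _ => (hginv (y * ε)).1.trans_eq
      (by simp [hg, mul_div_assoc, div_self hε.ne']))
  have hI2 : I ≤ α⁻¹ := by
    have := intervalIntegral.integral_mono_on (μ := MeasureTheory.volume) (a := (0:ℝ)) (b := 1) zero_le_one
      ((ha_cont.inv₀ (aux_ne hα ha_lb)).intervalIntegrable 0 1)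
      (_root_.intervalIntegrable_const (c := α⁻¹))
      (fun y _ => inv_anti₀ hα (ha_lb y))
    simpa using this
  have ht' : r + (⌊t / ε⌋ : ℝ) * ε = t := by simpa [zsmul_eq_mul] using ht
  have hzs : (⌊t / ε⌋ • (ε * I) : ℝ) = I * ((⌊t / ε⌋ : ℝ) * ε) := by
    simp [zsmul_eq_mul]; ring
  rw [hsplit, hzs]
  have heq : (∫ y in (0:ℝ)..r, g y) + I * ((⌊t / ε⌋ : ℝ) * ε) - I * t
      = (∫ y in (0:ℝ)..r, g y) - I * r := by linear_combination I * ht'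
  rw [heq, abs_sub_le_iff, div_eq_mul_inv]
  have hr0 : 0 ≤ r := hrmem.1
  have hrε : r ≤ ε := hrmem.2.le
  constructor <;> nlinarith [mul_le_mul_of_nonneg_right hI2 hr0]

private lemma aux_F1 (hα : 0 < α) (ha_cont : Continuous a) (ha_per : Function.Periodic a 1)
    (ha_lb : ∀ y, α ≤ a y) {n : ℕ} (hn : 0 < n) :
    (∫ y in (0:ℝ)..1, (a (y / (1 / (n:ℝ))))⁻¹) = ∫ y in (0:ℝ)..1, (a y)⁻¹ := by
  set ε : ℝ := 1 / (n:ℝ) with hε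
  have hεpos : 0 < ε := by positivity
  have hgc : Continuous fun y => (a (y / ε))⁻¹ := aux_g_cont hα ha_cont ha_lb ε
  have hint : ∀ t₁ t₂ : ℝ, IntervalIntegrable (fun y => (a (y / ε))⁻¹) MeasureTheory.volume t₁ t₂ :=
    fun t₁ t₂ => hgc.intervalIntegrable t₁ t₂
  have hper : Function.Periodic (fun y => (a (y / ε))⁻¹) ε := aux_g_per ha_per hεpos.ne'
  have h1 : (0:ℝ) + (n:ℤ) • ε = 1 := by
    simp [hε, zsmul_eq_mul]
    field_simp
  have := hper.intervalIntegral_add_zsmul_eq (n:ℤ) 0 hint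
  rw [h1, zero_add, aux_int_per hα ha_cont ha_lb hεpos] at this
  rw [this, zsmul_eq_mul, hε]
  push_cast
  field_simp

end Aux

/-- Steady-state homogenization: the two-point boundary-value problem
`d/dx (a(x/ε) u') = 0`, `u(0)=0`, `u(1)=1` has the unique solution
`u_ε(x) = a* ∫₀ˣ dy/a(y/ε)`, and `u_ε → x` uniformly with error `O(ε)`,
with a constant depending only on the bounds of `a`. -/
theorem steady_state_homogenization
    (a : ℝ → ℝ) (α : ℝ) (hα : 0 < α)
    (ha_cont : Continuous a) (ha_per : Function.Periodic a 1)
    (ha_lb : ∀ y, α ≤ a y)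
    (astar : ℝ) (hastar : astar = (∫ y in (0:ℝ)..1, (a y)⁻¹)⁻¹)
    (uε : ℝ → ℝ → ℝ)
    (huε : ∀ ε x, uε ε x = astar * ∫ y in (0:ℝ)..x, (a (y/ε))⁻¹) :
    -- uniqueness: any solution of the BVP coincides with uε
    (∀ ε : ℝ, (∃ n : ℕ, 0 < n ∧ ε = 1/(n:ℝ)) →
      ∀ u : ℝ → ℝ, Differentiable ℝ u → u 0 = 0 → u 1 = 1 →
        (∃ c : ℝ, ∀ x, a (x/ε) * deriv u x = c) →
        ∀ x ∈ Set.Icc (0:ℝ) 1, u x = uε ε x) ∧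
    -- uniform O(ε) convergence to the homogenized solution u_h(x) = x
    ∃ C : ℝ, 0 ≤ C ∧
      ∀ ε : ℝ, (∃ n : ℕ, 0 < n ∧ ε = 1/(n:ℝ)) →
        ∀ x ∈ Set.Icc (0:ℝ) 1, |uε ε x - x| ≤ C * ε := by
  have hne : ∀ y, a y ≠ 0 := aux_ne hα ha_lb
  set I : ℝ := ∫ y in (0:ℝ)..1, (a y)⁻¹ with hI
  have hIpos : 0 < I :=
    intervalIntegral.intervalIntegral_pos_of_pos
      ((ha_cont.inv₀ hne).intervalIntegrable 0 1)
      (fun y => inv_pos.2 (hα.trans_le (ha_lb y))) one_pos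
  have hastar_pos : 0 < astar := by rw [hastar]; exact inv_pos.2 hIpos
  constructor
  · rintro ε ⟨n, hn, rfl⟩ u hu hu0 hu1 ⟨c, hc⟩ x hx
    have hnpos : (0:ℝ) < (n:ℝ) := Nat.cast_pos.mpr hn
    set ε : ℝ := 1 / (n:ℝ) with hε
    have hεpos : 0 < ε := by positivity
    have hgc : Continuous fun y => (a (y / ε))⁻¹ := aux_g_cont hα ha_cont ha_lb ε
    have hderiv : deriv u = fun y => c * (a (y / ε))⁻¹ := by
      funext y
      have h := hc y
      field_simp [hne (y / ε)]
      linear_combination h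
    have hFTC : ∀ t : ℝ, u t = c * ∫ y in (0:ℝ)..t, (a (y / ε))⁻¹ := by
      intro t
      have h1 : ∫ y in (0:ℝ)..t, deriv u y = u t - u 0 :=
        intervalIntegral.integral_deriv_eq_sub (fun y _ => hu y)
          (by rw [hderiv]; exact (continuous_const.mul hgc).intervalIntegrable 0 t)
      rw [hu0, sub_zero] at h1
      rw [← h1, hderiv, intervalIntegral.integral_const_mul]
    have hF1 : (∫ y in (0:ℝ)..1, (a (y / ε))⁻¹) = I := aux_F1 hα ha_cont ha_per ha_lb hn
    have hc1 : c * I = 1 := by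
      have h := hFTC 1
      rw [hF1, hu1] at h
      exact h.symm
    have hcval : c = astar := by
      rw [hastar]
      field_simp
      linarith [hc1]
    rw [huε, hFTC x, hcval]
  · refine ⟨astar * α⁻¹, by positivity, ?_⟩
    rintro ε ⟨n, hn, rfl⟩ x hx
    have hnpos : (0:ℝ) < (n:ℝ) := Nat.cast_pos.mpr hn
    set ε : ℝ := 1 / (n:ℝ) with hε
    have hεpos : 0 < ε := by positivity
    have hkey := aux_est hα ha_cont ha_per ha_lb hεpos x
    rw [← hI] at hkey
    have hx' : uε ε x - x = astar * ((∫ y in (0:ℝ)..x, (a (y / ε))⁻¹) - I * x) := by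
      rw [huε, hastar]
      field_simp
    rw [hx', abs_mul, abs_of_pos hastar_pos]
    calc astar * |(∫ y in (0:ℝ)..x, (a (y / ε))⁻¹) - I * x|
        ≤ astar * (ε / α) := by
          apply mul_le_mul_of_nonneg_left _ hastar_pos.le
          simpa [mul_comm] using hkey
      _ = astar * α⁻¹ * ε := by ring
end
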